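/- Let S be a right LCM semigroup with identity in which incomparable elements have disjoint principal right ideals. Then every foundation set F for S contains an accurate foundation set F_a ⊆ F; in particular S has the accurate refinement property. -/

import Mathlib

/-- The principal right ideal `sS`. -/
def rIdeal {S : Type*} [Monoid S] (s : S) : Set S := {x | ∃ t, x = s * t}

/-- Foundation set for a right LCM monoid. -/
def FoundationSet {S : Type*} [Monoid S] (F : Set S) : Prop :=
  F.Finite ∧ ∀ s : S, ∃ t ∈ F, (rIdeal s ∩ rIdeal t).Nonempty

/-- Accurate set: distinct elements have disjoint principal right ideals. -/
def Accurate {S : Type*} [Monoid S] (F : Set S) : Prop :=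
  ∀ s ∈ F, ∀ t ∈ F, s ≠ t → rIdeal s ∩ rIdeal t = ∅


/-- If incomparable elements of a right LCM monoid have disjoint principal right
ideals, then every foundation set contains an accurate foundation set; in
particular the monoid has the accurate refinement property (AR). -/
theorem stmt2 {S : Type*} [Monoid S]
    (hLCM : ∀ s t : S, rIdeal s ∩ rIdeal t = ∅ ∨ ∃ r : S, rIdeal s ∩ rIdeal t = rIdeal r)
    (hdisj : ∀ s t : S, t ∉ rIdeal s → s ∉ rIdeal t → rIdeal s ∩ rIdeal t = ∅) :
    ∀ F : Set S, FoundationSet F →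
      ∃ Fa ⊆ F, FoundationSet Fa ∧ Accurate Fa ∧ ∀ a ∈ Fa, ∃ f ∈ F, a ∈ rIdeal f := by
  classical
  intro F hF
  obtain ⟨hfin, hfound⟩ := hF
  have self_mem : ∀ s : S, s ∈ rIdeal s := fun s => ⟨1, (mul_one s).symm⟩
  have sub : ∀ {s t : S}, s ∈ rIdeal t → rIdeal s ⊆ rIdeal t := by
    rintro s t ⟨u, rfl⟩ x ⟨v, rfl⟩; exact ⟨u * v, mul_assoc _ _ _⟩
  -- maximal elements of F
  set M : Set S := {s | s ∈ F ∧ ∀ t ∈ F, s ∈ rIdeal t → t ∈ rIdeal s} with hMdef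
  have hMF : M ⊆ F := fun s hs => hs.1
  have hmax : ∀ s ∈ F, ∃ m ∈ M, s ∈ rIdeal m := by
    intro s hs
    have hfin' : ({t | t ∈ F ∧ s ∈ rIdeal t} : Set S).Finite :=
      hfin.subset (fun x hx => hx.1)
    obtain ⟨a, ha, hamax'⟩ := Set.Finite.exists_maximalFor rIdeal _ hfin' ⟨s, hs, self_mem s⟩
    have hamax : ∀ t ∈ ({t | t ∈ F ∧ s ∈ rIdeal t} : Set S), rIdeal a ≤ rIdeal t →
        rIdeal a = rIdeal t := fun t ht h => le_antisymm h (hamax' ht h)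
    refine ⟨a, ⟨ha.1, ?_⟩, ha.2⟩
    intro t ht hat
    have hst : s ∈ rIdeal t := sub hat ha.2
    have heq := hamax t ⟨ht, hst⟩ (sub hat)
    rw [heq]; exact self_mem t
  -- choose one representative per maximal ideal
  set f : Set S → S := fun i => if h : ∃ m, m ∈ M ∧ rIdeal m = i then h.choose else 1 with hfdef
  have hf : ∀ i ∈ rIdeal '' M, f i ∈ M ∧ rIdeal (f i) = i := by
    rintro i ⟨m, hm, rfl⟩
    have h : ∃ m', m' ∈ M ∧ rIdeal m' = rIdeal m := ⟨m, hm, rfl⟩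
    simp only [hfdef, dif_pos h]
    exact h.choose_spec
  refine ⟨f '' (rIdeal '' M), ?_, ⟨(hfin.subset hMF).image rIdeal |>.image f, ?_⟩, ?_, ?_⟩
  · rintro a ⟨i, hi, rfl⟩
    exact hMF (hf i hi).1
  · -- foundation
    intro s
    obtain ⟨t, htF, x, hxs, hxt⟩ := hfound s
    obtain ⟨m, hm, htm⟩ := hmax t htF
    refine ⟨f (rIdeal m), ⟨rIdeal m, ⟨m, hm, rfl⟩, rfl⟩, x, hxs, ?_⟩
    rw [(hf _ ⟨m, hm, rfl⟩).2]
    exact sub htm hxt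
  · -- accurate
    rintro a ⟨i, hi, rfl⟩ b ⟨j, hj, rfl⟩ hne
    obtain ⟨haM, hia⟩ := hf i hi
    obtain ⟨hbM, hjb⟩ := hf j hj
    have hij : rIdeal (f i) ≠ rIdeal (f j) := by
      intro h
      apply hne
      rw [hia, hjb] at h
      rw [h]
    refine hdisj _ _ ?_ ?_
    · intro hba
      have h2 := hbM.2 (f i) (hMF haM) hba
      exact hij (le_antisymm (sub h2) (sub hba))
    · intro hab
      have h2 := haM.2 (f j) (hMF hbM) hab
      exact hij (le_antisymm (sub hab) (sub h2))
  · rintro a ⟨i, hi, rfl⟩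
    exact ⟨f i, hMF (hf i hi).1, self_mem _⟩
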